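/- For every real number s with 0 < s < 1/2, one has (1/(2s) + π²s/3)·sin(2πs) < π. -/

import Mathlib

open Real

lemma aux_sin_ge {x : ℝ} (hx : 0 ≤ x) : x - x^3/6 ≤ Real.sin x := by
  have hmono : Monotone (fun x : ℝ => Real.sin x - x + x^3/6) := by
    apply monotone_of_deriv_nonneg
    · fun_prop
    · intro y
      have H := ((Real.hasDerivAt_sin y).sub (hasDerivAt_id' (𝕜 := ℝ) y)).add
        ((hasDerivAt_pow 3 y).div_const 6)
      rw [show deriv (fun x : ℝ => Real.sin x - x + x^3/6) y = _ from H.deriv]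
      push_cast
      have := Real.one_sub_sq_div_two_le_cos (x := y)
      linarith
  have := hmono hx
  simp at this
  linarith

lemma aux_cos_le {x : ℝ} (hx : 0 ≤ x) : Real.cos x ≤ 1 - x^2/2 + x^4/24 := by
  have hmono : MonotoneOn (fun x : ℝ => 1 - x^2/2 + x^4/24 - Real.cos x) (Set.Ici 0) := by
    apply monotoneOn_of_deriv_nonneg (convex_Ici 0)
    · fun_prop
    · fun_prop
    · intro y hy
      simp only [interior_Ici, Set.mem_Ioi] at hy
      have H := (((hasDerivAt_const y (1:ℝ)).sub ((hasDerivAt_pow 2 y).div_const 2)).add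
        ((hasDerivAt_pow 4 y).div_const 24)).sub (Real.hasDerivAt_cos y)
      rw [show deriv (fun x : ℝ => 1 - x^2/2 + x^4/24 - Real.cos x) y = _ from H.deriv]
      push_cast
      simp only [pow_one]
      have := aux_sin_ge hy.le
      linarith
  have := hmono (Set.mem_Ici.2 le_rfl) (Set.mem_Ici.2 hx) hx
  simp at this
  linarith

lemma aux_sin_le {x : ℝ} (hx : 0 ≤ x) : Real.sin x ≤ x - x^3/6 + x^5/120 := by
  have hmono : MonotoneOn (fun x : ℝ => x - x^3/6 + x^5/120 - Real.sin x) (Set.Ici 0) := by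
    apply monotoneOn_of_deriv_nonneg (convex_Ici 0)
    · fun_prop
    · fun_prop
    · intro y hy
      simp only [interior_Ici, Set.mem_Ioi] at hy
      have H := (((hasDerivAt_id' (𝕜 := ℝ) y).sub ((hasDerivAt_pow 3 y).div_const 6)).add
        ((hasDerivAt_pow 5 y).div_const 120)).sub (Real.hasDerivAt_sin y)
      rw [show deriv (fun x : ℝ => x - x^3/6 + x^5/120 - Real.sin x) y = _ from H.deriv]
      push_cast
      have := aux_cos_le hy.le
      linarith
  have := hmono (Set.mem_Ici.2 le_rfl) (Set.mem_Ici.2 hx) hx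
  simp at this
  linarith

theorem stmt_1 (s : ℝ) (h0 : 0 < s) (h1 : s < 1/2) :
    (1/(2*s) + π^2 * s / 3) * Real.sin (2*π*s) < π := by
  set x := 2*π*s with hxdef
  have hπ := Real.pi_pos
  have hπlt : π < 3.2 := by linarith [Real.pi_lt_d2]
  have hx0 : 0 < x := by positivity
  have hxπ : x < π := by
    rw [hxdef]; nlinarith
  have hsin := aux_sin_le hx0.le
  have hkey : (6 + x^2) * Real.sin x < 6 * x := by
    have h14 : x^2 < 14 := by nlinarith
    nlinarith [pow_pos hx0 5, mul_pos (pow_pos hx0 5) (by linarith : (0:ℝ) < 14 - x^2)]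
  -- rewrite goal
  have hs : (1/(2*s) + π^2 * s / 3) = (6 + x^2) / (12 * s) := by
    rw [hxdef]; field_simp; ring
  rw [hs, div_mul_eq_mul_div, div_lt_iff₀ (by positivity)]
  calc (6 + x^2) * Real.sin x < 6 * x := hkey
    _ = π * (12 * s) := by rw [hxdef]; ring
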